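/- Let A be a weak *-Hopf algebra with a normalized Haar integral h, let s ∈ A_R with s* = s, and set l := h·s² (which is a left integral) and e_l := s·h·s. Let M be an A-module algebra with crossed product M⋊A, and put E_l(m) := l▷m, which lies in M^A. Then: (i) for every left integral l' ∈ A and all a ∈ A, m ∈ M one has (1⋊a)·(m⋊1)·(1⋊l') = ((a▷m)⋊1)·(1⋊l') in M⋊A; (ii) 1⋊e_l commutes with n⋊1 for every n ∈ M^A, and (1⋊e_l)·(m⋊1)·(1⋊e_l) = (E_l(m)⋊1)·(1⋊e_l) = (1⋊e_l)·(E_l(m)⋊1) for all m ∈ M; (iii) in A one has e_l² = (Σ l₍₁₎·S(l₍₂₎))·e_l; in particular if Σ l₍₁₎·S(l₍₂₎) = 1 then e_l is idempotent. -/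

import Mathlib

open scoped TensorProduct

noncomputable section

/-- The componentwise star operation on a tensor product of star algebras,
as an additive map (it is conjugate-linear, hence not a `LinearMap`). -/
def tensorStar (A B : Type) [Ring A] [Algebra ℂ A] [StarRing A] [StarModule ℂ A]
    [Ring B] [Algebra ℂ B] [StarRing B] [StarModule ℂ B] :
    A ⊗[ℂ] B →+ A ⊗[ℂ] B :=
  TensorProduct.liftAddHom
    (AddMonoidHom.mk'
      (fun a => AddMonoidHom.mk' (fun b => star a ⊗ₜ[ℂ] star b)
        (fun x y => by
          show star a ⊗ₜ[ℂ] star (x + y) = star a ⊗ₜ[ℂ] star x + star a ⊗ₜ[ℂ] star y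
          rw [star_add, TensorProduct.tmul_add]))
      (fun x y => by
        ext b
        show star (x + y) ⊗ₜ[ℂ] star b = star x ⊗ₜ[ℂ] star b + star y ⊗ₜ[ℂ] star b
        rw [star_add, TensorProduct.add_tmul]))
    (fun r a b => by
      show star (r • a) ⊗ₜ[ℂ] star b = star a ⊗ₜ[ℂ] star (r • b)
      rw [star_smul, star_smul, TensorProduct.smul_tmul])

/-- A finite dimensional weak `*`-Hopf algebra over `ℂ` (axioms of [BNS]),
together with the derived properties of the antipode (which follow from the
axioms and are included as fields for convenience). -/
structure WeakHopfAlgebra (A : Type) [Ring A] [Algebra ℂ A] [StarRing A] [StarModule ℂ A] where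
  Δ : A →ₗ[ℂ] A ⊗[ℂ] A
  ε : A →ₗ[ℂ] ℂ
  S : A →ₗ[ℂ] A
  Sinv : A →ₗ[ℂ] A
  finite : FiniteDimensional ℂ A
  Δ_mul : ∀ x y : A, Δ (x * y) = Δ x * Δ y
  Δ_star : ∀ x : A, Δ (star x) = tensorStar A A (Δ x)
  coassoc : ∀ x : A,
    (TensorProduct.assoc ℂ A A A) ((TensorProduct.map Δ (LinearMap.id : A →ₗ[ℂ] A)) (Δ x))
      = (TensorProduct.map (LinearMap.id : A →ₗ[ℂ] A) Δ) (Δ x)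
  counit_left : ∀ x : A,
    (TensorProduct.lid ℂ A) ((TensorProduct.map ε (LinearMap.id : A →ₗ[ℂ] A)) (Δ x)) = x
  counit_right : ∀ x : A,
    (TensorProduct.rid ℂ A) ((TensorProduct.map (LinearMap.id : A →ₗ[ℂ] A) ε) (Δ x)) = x
  unit_weak :
    (Δ 1 ⊗ₜ[ℂ] (1 : A)) * ((TensorProduct.assoc ℂ A A A).symm ((1 : A) ⊗ₜ[ℂ] Δ 1))
      = (TensorProduct.map Δ (LinearMap.id : A →ₗ[ℂ] A)) (Δ 1)
  unit_weak' :
    ((TensorProduct.assoc ℂ A A A).symm ((1 : A) ⊗ₜ[ℂ] Δ 1)) * (Δ 1 ⊗ₜ[ℂ] (1 : A))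
      = (TensorProduct.map Δ (LinearMap.id : A →ₗ[ℂ] A)) (Δ 1)
  counit_weak : ∀ x y z : A,
    ε (x * y * z) = (TensorProduct.lid ℂ ℂ)
      ((TensorProduct.map (ε ∘ₗ LinearMap.mulLeft ℂ x) (ε ∘ₗ LinearMap.mulRight ℂ z)) (Δ y))
  counit_weak' : ∀ x y z : A,
    ε (x * y * z) = (TensorProduct.lid ℂ ℂ)
      ((TensorProduct.map (ε ∘ₗ LinearMap.mulRight ℂ z) (ε ∘ₗ LinearMap.mulLeft ℂ x)) (Δ y))
  antipode_left : ∀ x : A,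
    LinearMap.mul' ℂ A ((TensorProduct.map S (LinearMap.id : A →ₗ[ℂ] A)) (Δ x))
      = (TensorProduct.rid ℂ A)
          ((TensorProduct.map (LinearMap.id : A →ₗ[ℂ] A) (ε ∘ₗ LinearMap.mulLeft ℂ x)) (Δ 1))
  antipode_right : ∀ x : A,
    LinearMap.mul' ℂ A ((TensorProduct.map (LinearMap.id : A →ₗ[ℂ] A) S) (Δ x))
      = (TensorProduct.lid ℂ A)
          ((TensorProduct.map (ε ∘ₗ LinearMap.mulRight ℂ x) (LinearMap.id : A →ₗ[ℂ] A)) (Δ 1))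
  antipode_mid : ∀ x : A,
    LinearMap.mul' ℂ A
      ((TensorProduct.map (LinearMap.mul' ℂ A ∘ₗ TensorProduct.map S (LinearMap.id : A →ₗ[ℂ] A)) S)
        ((TensorProduct.map Δ (LinearMap.id : A →ₗ[ℂ] A)) (Δ x))) = S x
  S_Sinv : ∀ x : A, S (Sinv x) = x
  Sinv_S : ∀ x : A, Sinv (S x) = x
  S_antimul : ∀ x y : A, S (x * y) = S y * S x
  S_anticomul : ∀ x : A, Δ (S x) = (TensorProduct.comm ℂ A A) ((TensorProduct.map S S) (Δ x))
  S_star : ∀ x : A, star (S (star x)) = Sinv x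

/-- The set of elements commuting with everything. -/
def centerSet (R : Type) [Mul R] : Set R := {z | ∀ r : R, z * r = r * z}

namespace WeakHopfAlgebra

variable {A : Type} [Ring A] [Algebra ℂ A] [StarRing A] [StarModule ℂ A]

/-- `Σ x₍₁₎ · S(x₍₂₎)`. -/
def swIdS (W : WeakHopfAlgebra A) (x : A) : A :=
  LinearMap.mul' ℂ A ((TensorProduct.map (LinearMap.id : A →ₗ[ℂ] A) W.S) (W.Δ x))

/-- `Σ S(x₍₁₎) · x₍₂₎`. -/
def swSId (W : WeakHopfAlgebra A) (x : A) : A :=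
  LinearMap.mul' ℂ A ((TensorProduct.map W.S (LinearMap.id : A →ₗ[ℂ] A)) (W.Δ x))

/-- `Σ x₍₂₎ · S⁻¹(x₍₁₎)`. -/
def swIdSinv (W : WeakHopfAlgebra A) (x : A) : A :=
  LinearMap.mul' ℂ A
    ((TensorProduct.map (LinearMap.id : A →ₗ[ℂ] A) W.Sinv) ((TensorProduct.comm ℂ A A) (W.Δ x)))

/-- `Σ S⁻¹(x₍₂₎) · x₍₁₎`. -/
def swSinvId (W : WeakHopfAlgebra A) (x : A) : A :=
  LinearMap.mul' ℂ A
    ((TensorProduct.map W.Sinv (LinearMap.id : A →ₗ[ℂ] A)) ((TensorProduct.comm ℂ A A) (W.Δ x)))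

/-- The left subalgebra `A_L = {(φ ⊗ id)(Δ 1) : φ ∈ A*}`. -/
def AL (W : WeakHopfAlgebra A) : Set A :=
  {a | ∃ φ : A →ₗ[ℂ] ℂ,
    a = (TensorProduct.lid ℂ A) ((TensorProduct.map φ (LinearMap.id : A →ₗ[ℂ] A)) (W.Δ 1))}

/-- The right subalgebra `A_R = {(id ⊗ φ)(Δ 1) : φ ∈ A*}`. -/
def AR (W : WeakHopfAlgebra A) : Set A :=
  {a | ∃ φ : A →ₗ[ℂ] ℂ,
    a = (TensorProduct.rid ℂ A) ((TensorProduct.map (LinearMap.id : A →ₗ[ℂ] A) φ) (W.Δ 1))}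

/-- A left integral: `a · l = Σ a₍₁₎ S(a₍₂₎) · l` for all `a`. -/
def IsLeftIntegral (W : WeakHopfAlgebra A) (l : A) : Prop := ∀ a : A, a * l = W.swIdS a * l

/-- A right integral: `r · a = r · Σ S(a₍₁₎) a₍₂₎` for all `a`. -/
def IsRightIntegral (W : WeakHopfAlgebra A) (r : A) : Prop := ∀ a : A, r * a = r * W.swSId a

/-- A normalized Haar integral. -/
def IsHaar (W : WeakHopfAlgebra A) (h : A) : Prop :=
  W.IsLeftIntegral h ∧ W.IsRightIntegral h ∧ W.swSId h = 1 ∧ W.swIdS h = 1 ∧ W.S h = h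

/-- The canonical left action of a functional `λ ∈ A*` on `A`:
`λ ⇀ a = Σ a₍₁₎ · ⟨λ, a₍₂₎⟩`. -/
def lact (W : WeakHopfAlgebra A) (lam : A →ₗ[ℂ] ℂ) : A →ₗ[ℂ] A :=
  (TensorProduct.rid ℂ A).toLinearMap ∘ₗ
    (TensorProduct.map (LinearMap.id : A →ₗ[ℂ] A) lam) ∘ₗ W.Δ

/-- `λ ∈ A*` is a left integral of the dual weak Hopf algebra:
`λ ⇀ a ∈ A_L` for all `a ∈ A`. -/
def IsDualLeftIntegral (W : WeakHopfAlgebra A) (lam : A →ₗ[ℂ] ℂ) : Prop :=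
  ∀ a : A, W.lact lam a ∈ W.AL

/-- A dual pair of left integrals `(l, λ)`. -/
def IsDualPair (W : WeakHopfAlgebra A) (l : A) (lam : A →ₗ[ℂ] ℂ) : Prop :=
  W.IsLeftIntegral l ∧ W.IsDualLeftIntegral lam ∧
  W.lact lam l = 1 ∧
  (∀ a : A,
    (TensorProduct.rid ℂ A)
      ((TensorProduct.map (LinearMap.id : A →ₗ[ℂ] A) (lam ∘ₗ LinearMap.mulLeft ℂ a)) (W.Δ l))
      = W.S a) ∧
  (∀ a : A,
    (TensorProduct.lid ℂ A)
      ((TensorProduct.map (lam ∘ₗ LinearMap.mulRight ℂ a ∘ₗ W.Sinv)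
        (LinearMap.id : A →ₗ[ℂ] A)) (W.Δ l)) = a)

end WeakHopfAlgebra

/-- A (left) module `*`-algebra over a weak `*`-Hopf algebra. -/
structure ModuleAlgebra {A : Type} [Ring A] [Algebra ℂ A] [StarRing A] [StarModule ℂ A]
    (W : WeakHopfAlgebra A) (M : Type) [Ring M] [Algebra ℂ M] [StarRing M] [StarModule ℂ M] where
  act : A →ₗ[ℂ] M →ₗ[ℂ] M
  act_mul : ∀ (a b : A) (m : M), act (a * b) m = act a (act b m)
  act_one : ∀ m : M, act 1 m = m
  act_mul' : ∀ (a : A) (m n : M),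
    act a (m * n) = LinearMap.mul' ℂ M ((TensorProduct.map (act.flip m) (act.flip n)) (W.Δ a))
  act_star : ∀ (a : A) (m : M), star (act a m) = act (star (W.S a)) (star m)
  act_unit : ∀ a : A, act a 1 = act (W.swIdS a) 1

namespace ModuleAlgebra

variable {A : Type} [Ring A] [Algebra ℂ A] [StarRing A] [StarModule ℂ A]
variable {M : Type} [Ring M] [Algebra ℂ M] [StarRing M] [StarModule ℂ M]
variable {W : WeakHopfAlgebra A}

/-- `M_R = A ▷ 1_M`. -/
def MR (MA : ModuleAlgebra W M) : Set M := Set.range fun a : A => MA.act a 1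

/-- The fixed point algebra `M^A`. -/
def fixed (MA : ModuleAlgebra W M) : Set M :=
  {n | ∀ (a : A) (m : M), MA.act a (m * n) = MA.act a m * n}

end ModuleAlgebra

section Crossed

variable {A : Type} [Ring A] [Algebra ℂ A] [StarRing A] [StarModule ℂ A]
variable {M : Type} [Ring M] [Algebra ℂ M] [StarRing M] [StarModule ℂ M]
variable {W : WeakHopfAlgebra A}

/-- The subspace of `M ⊗ A` by which one divides to form the crossed product
`M ⋊ A = M ⊗_{A_L} A`. -/
def crossedRel (MA : ModuleAlgebra W M) : Submodule ℂ (M ⊗[ℂ] A) :=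
  Submodule.span ℂ
    {x | ∃ (m : M) (a b : A), b ∈ W.AL ∧
      x = (m * MA.act b 1) ⊗ₜ[ℂ] a - m ⊗ₜ[ℂ] (b * a)}

/-- The crossed product `M ⋊ A` as a vector space. -/
abbrev Crossed (MA : ModuleAlgebra W M) : Type := (M ⊗[ℂ] A) ⧸ crossedRel MA

/-- The canonical projection `M ⊗ A → M ⋊ A`; `cmk MA (m ⊗ₜ a)` is `m ⋊ a`. -/
def cmk (MA : ModuleAlgebra W M) : M ⊗[ℂ] A →ₗ[ℂ] Crossed MA := (crossedRel MA).mkQ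

/-- The embedding `M → M ⋊ A`, `m ↦ m ⋊ 1`. -/
def iM (MA : ModuleAlgebra W M) : M →ₗ[ℂ] Crossed MA :=
  cmk MA ∘ₗ (TensorProduct.mk ℂ M A).flip (1 : A)

/-- The map `A → M ⋊ A`, `a ↦ 1 ⋊ a`. -/
def iA (MA : ModuleAlgebra W M) : A →ₗ[ℂ] Crossed MA :=
  cmk MA ∘ₗ (TensorProduct.mk ℂ M A) (1 : M)

/-- The unit `1 ⋊ 1` of `M ⋊ A`. -/
def oneC (MA : ModuleAlgebra W M) : Crossed MA := cmk MA ((1 : M) ⊗ₜ[ℂ] (1 : A))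

/-- The multiplication of the crossed product `M ⋊ A`
(whose existence is the content of Theorem 3.1), as a bundled bilinear map
together with its defining formula on generators:
`(m ⋊ a)(m' ⋊ a') = Σ m (a₍₁₎ ▷ m') ⋊ a₍₂₎ a'`. -/
structure CrossedMul (MA : ModuleAlgebra W M) where
  mul : Crossed MA →ₗ[ℂ] Crossed MA →ₗ[ℂ] Crossed MA
  mul_def : ∀ (m m' : M) (a a' : A),
    mul (cmk MA (m ⊗ₜ[ℂ] a)) (cmk MA (m' ⊗ₜ[ℂ] a'))
      = cmk MA ((TensorProduct.map ((LinearMap.mulLeft ℂ m) ∘ₗ (MA.act.flip m'))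
          (LinearMap.mulRight ℂ a')) (W.Δ a))

/-- The star operation of the crossed product `M ⋊ A`
(whose existence is part of Theorem 3.1):
`(m ⋊ a)* = Σ (a₍₁₎* ▷ m*) ⋊ a₍₂₎*`. -/
structure CrossedStar (MA : ModuleAlgebra W M) where
  st : Crossed MA →+ Crossed MA
  st_smul : ∀ (c : ℂ) (x : Crossed MA), st (c • x) = (starRingEnd ℂ c) • st x
  st_def : ∀ (m : M) (a : A),
    st (cmk MA (m ⊗ₜ[ℂ] a))
      = cmk MA ((TensorProduct.map (MA.act.flip (star m)) (LinearMap.id : A →ₗ[ℂ] A))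
          (W.Δ (star a)))

/-- The multiplication on `(M ⋊ A) ⊗ B` induced by a crossed product
multiplication on `M ⋊ A` and the algebra structure of `B`. -/
def mulT (MA : ModuleAlgebra W M) (CS : CrossedMul MA) (B : Type) [Ring B] [Algebra ℂ B] :
    Crossed MA ⊗[ℂ] B →ₗ[ℂ] Crossed MA ⊗[ℂ] B →ₗ[ℂ] Crossed MA ⊗[ℂ] B :=
  TensorProduct.lift
    ((TensorProduct.mapBilinear (RingHom.id ℂ) (Crossed MA) B (Crossed MA) B).compl₁₂ CS.mul
      (LinearMap.mul ℂ B))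

end Crossed

section Aux

open TensorProduct

variable {A : Type} [Ring A] [Algebra ℂ A] [StarRing A] [StarModule ℂ A]

namespace WeakHopfAlgebra

variable (W : WeakHopfAlgebra A)

/-- `ε_t` as a linear map. -/
def etm : A →ₗ[ℂ] A :=
  LinearMap.mul' ℂ A ∘ₗ TensorProduct.map (LinearMap.id : A →ₗ[ℂ] A) W.S ∘ₗ W.Δ

lemma etm_apply (x : A) : W.etm x = W.swIdS x := rfl

lemma etm_eq (z : A) :
    W.etm z = (TensorProduct.lid ℂ A)
      ((TensorProduct.map (W.ε ∘ₗ LinearMap.mulRight ℂ z) (LinearMap.id : A →ₗ[ℂ] A))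
        (W.Δ 1)) :=
  W.antipode_right z

lemma etm_mem_AL (z : A) : W.etm z ∈ W.AL := ⟨_, W.etm_eq z⟩

lemma etm_sum {P : Finset (A × A)} (hP : W.Δ 1 = ∑ p ∈ P, p.1 ⊗ₜ[ℂ] p.2) (z : A) :
    W.etm z = ∑ p ∈ P, W.ε (p.1 * z) • p.2 := by
  rw [W.etm_eq, hP, map_sum, map_sum]
  simp [TensorProduct.lid_tmul]

lemma delta_one_mul_delta (x : A) {P Q : Finset (A × A)}
    (hP : W.Δ 1 = ∑ p ∈ P, p.1 ⊗ₜ[ℂ] p.2) (hQ : W.Δ x = ∑ q ∈ Q, q.1 ⊗ₜ[ℂ] q.2) :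
    W.Δ x = ∑ p ∈ P, ∑ q ∈ Q, (p.1 * q.1) ⊗ₜ[ℂ] (p.2 * q.2) := by
  conv_lhs => rw [show W.Δ x = W.Δ 1 * W.Δ x by rw [← W.Δ_mul, one_mul], hP, hQ]
  rw [Finset.sum_mul_sum]
  exact Finset.sum_congr rfl fun p _ => Finset.sum_congr rfl fun q _ =>
    Algebra.TensorProduct.tmul_mul_tmul _ _ _ _

lemma CT (x : A) :
    LinearMap.mul' ℂ A
      ((TensorProduct.map W.etm (LinearMap.id : A →ₗ[ℂ] A)) (W.Δ x)) = x := by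
  obtain ⟨P, hP⟩ := TensorProduct.exists_finset (W.Δ 1)
  obtain ⟨Q, hQ⟩ := TensorProduct.exists_finset (W.Δ x)
  conv_rhs => rw [← W.counit_left x, W.delta_one_mul_delta x hP hQ]
  rw [hQ, map_sum, map_sum]
  simp only [TensorProduct.map_tmul, LinearMap.id_coe, id_eq, LinearMap.mul'_apply, map_sum,
    TensorProduct.lid_tmul]
  rw [Finset.sum_comm]
  refine Finset.sum_congr rfl fun q _ => ?_
  rw [W.etm_sum hP, Finset.sum_mul]
  exact Finset.sum_congr rfl fun p _ => smul_mul_assoc _ _ _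

end WeakHopfAlgebra

end Aux
section Aux2

open TensorProduct

variable {A : Type} [Ring A] [Algebra ℂ A] [StarRing A] [StarModule ℂ A]

namespace WeakHopfAlgebra

variable (W : WeakHopfAlgebra A)

set_option synthInstance.maxHeartbeats 1000000 in
set_option maxHeartbeats 1000000 in
lemma L2 (x : A) :
    (TensorProduct.map (LinearMap.id : A →ₗ[ℂ] A) W.etm) (W.Δ x)
      = (TensorProduct.map (LinearMap.mulRight ℂ x) (LinearMap.id : A →ₗ[ℂ] A)) (W.Δ 1) := by
  obtain ⟨P, hP⟩ := TensorProduct.exists_finset (W.Δ 1)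
  obtain ⟨Q, hQ⟩ := TensorProduct.exists_finset (W.Δ x)
  set Ψ : A ⊗[ℂ] A →ₗ[ℂ] A :=
    (TensorProduct.rid ℂ A).toLinearMap ∘ₗ
      TensorProduct.map (LinearMap.id : A →ₗ[ℂ] A) W.ε ∘ₗ LinearMap.mulRight ℂ (W.Δ x) with hΨ
  have hΨΔ : ∀ z : A, Ψ (W.Δ z) = z * x := fun z => by
    simp only [hΨ, LinearMap.comp_apply, LinearMap.mulRight_apply, ← W.Δ_mul]
    exact W.counit_right (z * x)
  have hΨt : ∀ u v : A, Ψ (u ⊗ₜ[ℂ] v) = ∑ q ∈ Q, W.ε (v * q.2) • (u * q.1) := by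
    intro u v
    simp only [hΨ, LinearMap.comp_apply, LinearMap.mulRight_apply, hQ, Finset.mul_sum]
    rw [map_sum, map_sum]
    refine Finset.sum_congr rfl fun q _ => ?_
    rw [Algebra.TensorProduct.tmul_mul_tmul, TensorProduct.map_tmul]
    simp [TensorProduct.rid_tmul, mul_comm]
  have rhs1 : (TensorProduct.map (LinearMap.mulRight ℂ x) (LinearMap.id : A →ₗ[ℂ] A)) (W.Δ 1)
      = (TensorProduct.map Ψ (LinearMap.id : A →ₗ[ℂ] A))
          ((TensorProduct.map W.Δ (LinearMap.id : A →ₗ[ℂ] A)) (W.Δ 1)) := by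
    conv_lhs => rw [hP]
    conv_rhs => rw [hP]
    rw [map_sum, map_sum, map_sum]
    refine Finset.sum_congr rfl fun p _ => ?_
    simp [hΨΔ]
  have expand : ((TensorProduct.assoc ℂ A A A).symm ((1 : A) ⊗ₜ[ℂ] W.Δ 1)) * (W.Δ 1 ⊗ₜ[ℂ] (1 : A))
      = ∑ r ∈ P, ∑ p ∈ P, (p.1 ⊗ₜ[ℂ] (r.1 * p.2)) ⊗ₜ[ℂ] r.2 := by
    rw [hP, TensorProduct.tmul_sum, map_sum, TensorProduct.sum_tmul, Finset.sum_mul_sum]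
    refine Finset.sum_congr rfl fun r _ => Finset.sum_congr rfl fun p _ => ?_
    rw [TensorProduct.assoc_symm_tmul, Algebra.TensorProduct.tmul_mul_tmul,
      Algebra.TensorProduct.tmul_mul_tmul, one_mul, mul_one]
  rw [rhs1, ← W.unit_weak', expand, W.delta_one_mul_delta x hP hQ]
  simp only [map_sum, TensorProduct.map_tmul, LinearMap.id_coe, id_eq]
  calc
    ∑ p ∈ P, ∑ q ∈ Q, (p.1 * q.1) ⊗ₜ[ℂ] W.etm (p.2 * q.2)
        = ∑ p ∈ P, ∑ q ∈ Q, ∑ r ∈ P, W.ε (r.1 * p.2 * q.2) • ((p.1 * q.1) ⊗ₜ[ℂ] r.2) := by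
          refine Finset.sum_congr rfl fun p _ => Finset.sum_congr rfl fun q _ => ?_
          rw [W.etm_sum hP, TensorProduct.tmul_sum]
          exact Finset.sum_congr rfl fun r _ => by rw [TensorProduct.tmul_smul, mul_assoc]
    _ = ∑ p ∈ P, ∑ r ∈ P, ∑ q ∈ Q, W.ε (r.1 * p.2 * q.2) • ((p.1 * q.1) ⊗ₜ[ℂ] r.2) :=
          Finset.sum_congr rfl fun p _ => Finset.sum_comm
    _ = ∑ r ∈ P, ∑ p ∈ P, ∑ q ∈ Q, W.ε (r.1 * p.2 * q.2) • ((p.1 * q.1) ⊗ₜ[ℂ] r.2) :=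
          Finset.sum_comm
    _ = ∑ r ∈ P, ∑ p ∈ P, Ψ (p.1 ⊗ₜ[ℂ] (r.1 * p.2)) ⊗ₜ[ℂ] r.2 := by
          refine Finset.sum_congr rfl fun r _ => Finset.sum_congr rfl fun p _ => ?_
          rw [hΨt, TensorProduct.sum_tmul]
          exact Finset.sum_congr rfl fun q _ => by
            rw [TensorProduct.smul_tmul', mul_assoc]
end WeakHopfAlgebra
end Aux2
section Aux3

open TensorProduct

variable {A : Type} [Ring A] [Algebra ℂ A] [StarRing A] [StarModule ℂ A]

lemma tensorStar_tmul (a b : A) :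
    tensorStar A A (a ⊗ₜ[ℂ] b) = star a ⊗ₜ[ℂ] star b := by
  simp [tensorStar]

namespace WeakHopfAlgebra

variable (W : WeakHopfAlgebra A)

set_option synthInstance.maxHeartbeats 1000000 in
lemma uw_expand {P : Finset (A × A)} (hP : W.Δ 1 = ∑ p ∈ P, p.1 ⊗ₜ[ℂ] p.2) :
    (TensorProduct.map W.Δ (LinearMap.id : A →ₗ[ℂ] A)) (W.Δ 1)
      = ∑ p ∈ P, ∑ q ∈ P, (p.1 ⊗ₜ[ℂ] (p.2 * q.1)) ⊗ₜ[ℂ] q.2 := by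
  rw [← W.unit_weak, hP, TensorProduct.sum_tmul, TensorProduct.tmul_sum, map_sum,
    Finset.sum_mul_sum]
  refine Finset.sum_congr rfl fun p _ => Finset.sum_congr rfl fun q _ => ?_
  rw [TensorProduct.assoc_symm_tmul, Algebra.TensorProduct.tmul_mul_tmul,
    Algebra.TensorProduct.tmul_mul_tmul, one_mul, mul_one]

set_option synthInstance.maxHeartbeats 1000000 in
lemma uw'_expand {P : Finset (A × A)} (hP : W.Δ 1 = ∑ p ∈ P, p.1 ⊗ₜ[ℂ] p.2) :
    (TensorProduct.map W.Δ (LinearMap.id : A →ₗ[ℂ] A)) (W.Δ 1)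
      = ∑ p ∈ P, ∑ q ∈ P, (q.1 ⊗ₜ[ℂ] (p.1 * q.2)) ⊗ₜ[ℂ] p.2 := by
  rw [← W.unit_weak', hP, TensorProduct.sum_tmul, TensorProduct.tmul_sum, map_sum,
    Finset.sum_mul_sum]
  refine Finset.sum_congr rfl fun p _ => Finset.sum_congr rfl fun q _ => ?_
  rw [TensorProduct.assoc_symm_tmul, Algebra.TensorProduct.tmul_mul_tmul,
    Algebra.TensorProduct.tmul_mul_tmul, one_mul, mul_one]

lemma AR_rep {r : A} (hr : r ∈ W.AR) {P : Finset (A × A)}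
    (hP : W.Δ 1 = ∑ p ∈ P, p.1 ⊗ₜ[ℂ] p.2) :
    ∃ φ : A →ₗ[ℂ] ℂ, r = ∑ p ∈ P, φ p.2 • p.1 := by
  obtain ⟨φ, hφ⟩ := hr
  refine ⟨φ, ?_⟩
  rw [hφ, hP, map_sum, map_sum]
  simp [TensorProduct.rid_tmul]

lemma AL_rep {b : A} (hb : b ∈ W.AL) {P : Finset (A × A)}
    (hP : W.Δ 1 = ∑ p ∈ P, p.1 ⊗ₜ[ℂ] p.2) :
    ∃ φ : A →ₗ[ℂ] ℂ, b = ∑ p ∈ P, φ p.1 • p.2 := by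
  obtain ⟨φ, hφ⟩ := hb
  refine ⟨φ, ?_⟩
  rw [hφ, hP, map_sum, map_sum]
  simp [TensorProduct.lid_tmul]

set_option synthInstance.maxHeartbeats 1000000 in
lemma AR_delta₂ {r : A} (hr : r ∈ W.AR) :
    W.Δ r = W.Δ 1 * ((1 : A) ⊗ₜ[ℂ] r) := by
  obtain ⟨P, hP⟩ := TensorProduct.exists_finset (W.Δ 1)
  obtain ⟨φ, hrsum⟩ := W.AR_rep hr hP
  set C3 : (A ⊗[ℂ] A) ⊗[ℂ] A →ₗ[ℂ] A ⊗[ℂ] A :=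
    (TensorProduct.rid ℂ (A ⊗[ℂ] A)).toLinearMap ∘ₗ
      TensorProduct.map (LinearMap.id : A ⊗[ℂ] A →ₗ[ℂ] A ⊗[ℂ] A) φ with hC3
  have hC3t : ∀ (t : A ⊗[ℂ] A) (w : A), C3 (t ⊗ₜ[ℂ] w) = φ w • t := fun t w => by
    simp [hC3, TensorProduct.rid_tmul]
  have key : W.Δ r = C3 ((TensorProduct.map W.Δ (LinearMap.id : A →ₗ[ℂ] A)) (W.Δ 1)) := by
    conv_rhs => rw [hP]
    rw [map_sum, map_sum]
    simp only [TensorProduct.map_tmul, LinearMap.id_coe, id_eq, hC3t]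
    conv_lhs => rw [hrsum]
    rw [map_sum]
    exact Finset.sum_congr rfl fun p _ => by rw [map_smul]
  rw [key, W.uw_expand hP, map_sum, hP, Finset.sum_mul]
  refine Finset.sum_congr rfl fun p _ => ?_
  rw [map_sum, Finset.sum_congr rfl fun q _ => hC3t (p.1 ⊗ₜ[ℂ] (p.2 * q.1)) q.2,
    Algebra.TensorProduct.tmul_mul_tmul, mul_one, hrsum, Finset.mul_sum,
    TensorProduct.tmul_sum]
  exact Finset.sum_congr rfl fun q _ => by rw [mul_smul_comm, TensorProduct.tmul_smul]

set_option synthInstance.maxHeartbeats 1000000 in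
lemma AR_delta₁ {r : A} (hr : r ∈ W.AR) :
    W.Δ r = ((1 : A) ⊗ₜ[ℂ] r) * W.Δ 1 := by
  obtain ⟨P, hP⟩ := TensorProduct.exists_finset (W.Δ 1)
  obtain ⟨φ, hrsum⟩ := W.AR_rep hr hP
  set C3 : (A ⊗[ℂ] A) ⊗[ℂ] A →ₗ[ℂ] A ⊗[ℂ] A :=
    (TensorProduct.rid ℂ (A ⊗[ℂ] A)).toLinearMap ∘ₗ
      TensorProduct.map (LinearMap.id : A ⊗[ℂ] A →ₗ[ℂ] A ⊗[ℂ] A) φ with hC3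
  have hC3t : ∀ (t : A ⊗[ℂ] A) (w : A), C3 (t ⊗ₜ[ℂ] w) = φ w • t := fun t w => by
    simp [hC3, TensorProduct.rid_tmul]
  have key : W.Δ r = C3 ((TensorProduct.map W.Δ (LinearMap.id : A →ₗ[ℂ] A)) (W.Δ 1)) := by
    conv_rhs => rw [hP]
    rw [map_sum, map_sum]
    simp only [TensorProduct.map_tmul, LinearMap.id_coe, id_eq, hC3t]
    conv_lhs => rw [hrsum]
    rw [map_sum]
    exact Finset.sum_congr rfl fun p _ => by rw [map_smul]
  rw [key, W.uw'_expand hP, map_sum]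
  simp only [map_sum]
  rw [Finset.sum_comm, hP, Finset.mul_sum]
  refine Finset.sum_congr rfl fun q _ => ?_
  rw [Finset.sum_congr rfl fun p _ => hC3t (q.1 ⊗ₜ[ℂ] (p.1 * q.2)) p.2,
    Algebra.TensorProduct.tmul_mul_tmul, one_mul, hrsum, Finset.sum_mul,
    TensorProduct.tmul_sum]
  exact Finset.sum_congr rfl fun p _ => by
    rw [smul_mul_assoc, TensorProduct.tmul_smul]

set_option synthInstance.maxHeartbeats 1000000 in
lemma AL_AR_comm {b r : A} (hb : b ∈ W.AL) (hr : r ∈ W.AR) : b * r = r * b := by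
  obtain ⟨P, hP⟩ := TensorProduct.exists_finset (W.Δ 1)
  obtain ⟨φ, hbsum⟩ := W.AL_rep hb hP
  obtain ⟨ψ, hrsum⟩ := W.AR_rep hr hP
  set Ξ : (A ⊗[ℂ] A) ⊗[ℂ] A →ₗ[ℂ] A :=
    (TensorProduct.lid ℂ A).toLinearMap ∘ₗ
      (TensorProduct.rid ℂ (ℂ ⊗[ℂ] A)).toLinearMap ∘ₗ
        TensorProduct.map (TensorProduct.map φ (LinearMap.id : A →ₗ[ℂ] A)) ψ with hΞ
  have hΞt : ∀ u v w : A, Ξ ((u ⊗ₜ[ℂ] v) ⊗ₜ[ℂ] w) = (φ u * ψ w) • v := by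
    intro u v w
    simp [hΞ, TensorProduct.rid_tmul, TensorProduct.lid_tmul, smul_smul, mul_comm]
  have e1 : Ξ ((TensorProduct.map W.Δ (LinearMap.id : A →ₗ[ℂ] A)) (W.Δ 1)) = b * r := by
    rw [W.uw_expand hP, map_sum, hbsum, hrsum, Finset.sum_mul_sum]
    refine Finset.sum_congr rfl fun p _ => ?_
    rw [map_sum, Finset.sum_congr rfl fun q _ => hΞt p.1 (p.2 * q.1) q.2]
    exact Finset.sum_congr rfl fun q _ => by
      rw [smul_mul_assoc, mul_smul_comm, smul_smul]
  have e2 : Ξ ((TensorProduct.map W.Δ (LinearMap.id : A →ₗ[ℂ] A)) (W.Δ 1)) = r * b := by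
    rw [W.uw'_expand hP, map_sum]
    simp only [map_sum]
    rw [hbsum, hrsum, Finset.sum_mul]
    refine Finset.sum_congr rfl fun p _ => ?_
    rw [Finset.sum_congr rfl fun q _ => hΞt q.1 (p.1 * q.2) p.2, Finset.mul_sum]
    refine Finset.sum_congr rfl fun q _ => ?_
    rw [smul_mul_assoc, mul_smul_comm, smul_smul, mul_comm (ψ p.2) (φ q.1)]
  rw [← e1, e2]

end WeakHopfAlgebra

end Aux3
section Aux4

open TensorProduct

variable {A : Type} [Ring A] [Algebra ℂ A] [StarRing A] [StarModule ℂ A]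

namespace WeakHopfAlgebra

variable (W : WeakHopfAlgebra A)

lemma map_id_etm_delta_one :
    (TensorProduct.map (LinearMap.id : A →ₗ[ℂ] A) W.etm) (W.Δ 1) = W.Δ 1 := by
  rw [W.L2 1, LinearMap.mulRight_one]
  rw [TensorProduct.map_id, LinearMap.id_apply]

lemma etm_etm (x : A) : W.etm (W.etm x) = W.etm x := by
  obtain ⟨P, hP⟩ := TensorProduct.exists_finset (W.Δ 1)
  have h3 : W.etm (W.etm x) = (TensorProduct.lid ℂ A)
      ((TensorProduct.map (W.ε ∘ₗ LinearMap.mulRight ℂ x) (LinearMap.id : A →ₗ[ℂ] A))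
        ((TensorProduct.map (LinearMap.id : A →ₗ[ℂ] A) W.etm) (W.Δ 1))) := by
    conv_lhs => rw [W.etm_sum hP x, map_sum]
    conv_rhs => rw [hP]
    rw [map_sum, map_sum, map_sum]
    simp [TensorProduct.lid_tmul]
  rw [h3, W.map_id_etm_delta_one, ← W.etm_eq]

lemma S_injective : Function.Injective W.S := fun u v huv => by
  rw [← W.Sinv_S u, huv, W.Sinv_S]

lemma Sinv_antimul (x y : A) : W.Sinv (x * y) = W.Sinv y * W.Sinv x := by
  apply W.S_injective
  rw [W.S_Sinv, W.S_antimul, W.S_Sinv, W.S_Sinv]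

lemma star_h_leftIntegral {h : A} (hh : W.IsHaar h) : W.IsLeftIntegral (star h) := by
  have sub1 : ∀ b : A, b * star h = W.Sinv (W.etm b) * star h := by
    intro b
    have h1 := congrArg star (hh.2.1 (star b))
    rw [star_mul, star_mul, star_star] at h1
    have h2 : star (W.swSId (star b)) = W.Sinv (W.etm b) := by
      obtain ⟨Q, hQ⟩ := TensorProduct.exists_finset (W.Δ b)
      have hQs : W.Δ (star b) = ∑ q ∈ Q, star q.1 ⊗ₜ[ℂ] star q.2 := by
        rw [W.Δ_star, hQ, map_sum]
        exact Finset.sum_congr rfl fun q _ => tensorStar_tmul _ _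
      have e1 : W.swSId (star b) = ∑ q ∈ Q, W.S (star q.1) * star q.2 := by
        rw [swSId, hQs, map_sum, map_sum]
        simp
      have e2 : W.etm b = ∑ q ∈ Q, q.1 * W.S q.2 := by
        rw [etm, LinearMap.comp_apply, LinearMap.comp_apply, hQ, map_sum, map_sum]
        simp
      rw [e1, star_sum, e2, map_sum]
      refine Finset.sum_congr rfl fun q _ => ?_
      rw [star_mul, W.S_star, W.Sinv_antimul, W.Sinv_S, star_star]
    rw [h2] at h1
    exact h1
  intro a
  have h3 := sub1 (W.etm a)
  rw [W.etm_etm] at h3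
  rw [sub1 a, ← h3, W.etm_apply]

end WeakHopfAlgebra

end Aux4
section Aux5

open TensorProduct

variable {A : Type} [Ring A] [Algebra ℂ A] [StarRing A] [StarModule ℂ A]

namespace WeakHopfAlgebra

variable (W : WeakHopfAlgebra A)

lemma swIdS_mem_AL (z : A) : W.swIdS z ∈ W.AL := W.etm_apply z ▸ W.etm_mem_AL z

lemma delta_sws {s : A} (hs : s ∈ W.AR) (w : A) :
    W.Δ (s * w * s) = ((1:A) ⊗ₜ[ℂ] s) * W.Δ w * ((1:A) ⊗ₜ[ℂ] s) := by
  have h1 : W.Δ s * W.Δ w = ((1:A) ⊗ₜ[ℂ] s) * W.Δ w := by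
    rw [W.AR_delta₁ hs, mul_assoc, ← W.Δ_mul, one_mul]
  have h2 : W.Δ w * W.Δ s = W.Δ w * ((1:A) ⊗ₜ[ℂ] s) := by
    rw [W.AR_delta₂ hs, ← mul_assoc, ← W.Δ_mul, mul_one]
  rw [W.Δ_mul, W.Δ_mul, h1, mul_assoc, h2, ← mul_assoc]

lemma delta_hss {s : A} (hs : s ∈ W.AR) (w : A) :
    W.Δ (w * (s * s)) = W.Δ w * ((1:A) ⊗ₜ[ℂ] (s * s)) := by
  have hw1 : W.Δ w * W.Δ 1 = W.Δ w := by rw [← W.Δ_mul, mul_one]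
  have e1 : W.Δ w * W.Δ s = W.Δ w * ((1:A) ⊗ₜ[ℂ] s) := by
    rw [W.AR_delta₂ hs, ← mul_assoc, hw1]
  have hw2 : (W.Δ w * ((1:A) ⊗ₜ[ℂ] s)) * W.Δ 1 = W.Δ w * ((1:A) ⊗ₜ[ℂ] s) := by
    rw [mul_assoc, ← W.AR_delta₁ hs, W.AR_delta₂ hs, ← mul_assoc, ← W.Δ_mul, mul_one]
  have e2 : (W.Δ w * ((1:A) ⊗ₜ[ℂ] s)) * W.Δ s = W.Δ w * ((1:A) ⊗ₜ[ℂ] (s*s)) := by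
    rw [W.AR_delta₂ hs, ← mul_assoc, hw2, mul_assoc, Algebra.TensorProduct.tmul_mul_tmul,
      one_mul]
  rw [show w * (s * s) = (w * s) * s from by rw [mul_assoc], W.Δ_mul, W.Δ_mul, e1, e2]

lemma delta_sws_rep {s : A} (hs : s ∈ W.AR) (w : A) {Q : Finset (A × A)}
    (hQ : W.Δ w = ∑ q ∈ Q, q.1 ⊗ₜ[ℂ] q.2) :
    W.Δ (s * w * s) = ∑ q ∈ Q, q.1 ⊗ₜ[ℂ] (s * q.2 * s) := by
  rw [W.delta_sws hs, hQ, Finset.mul_sum, Finset.sum_mul]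
  refine Finset.sum_congr rfl fun q _ => ?_
  rw [Algebra.TensorProduct.tmul_mul_tmul, Algebra.TensorProduct.tmul_mul_tmul]
  rw [one_mul, mul_one]

lemma CT_rep (x : A) {Q : Finset (A × A)} (hQ : W.Δ x = ∑ q ∈ Q, q.1 ⊗ₜ[ℂ] q.2) :
    ∑ q ∈ Q, W.etm q.1 * q.2 = x := by
  have := W.CT x
  rw [hQ, map_sum, map_sum] at this
  simpa using this

end WeakHopfAlgebra

variable {M : Type} [Ring M] [Algebra ℂ M] [StarRing M] [StarModule ℂ M]
variable {W : WeakHopfAlgebra A} (MA : ModuleAlgebra W M) (CS : CrossedMul MA)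

lemma iM_apply (m : M) : iM MA m = cmk MA (m ⊗ₜ[ℂ] (1 : A)) := rfl

lemma iA_apply (a : A) : iA MA a = cmk MA ((1 : M) ⊗ₜ[ℂ] a) := rfl

lemma rel (a : A) {m : M} {b : A} (hb : b ∈ W.AL) :
    cmk MA ((m * MA.act b 1) ⊗ₜ[ℂ] a) = cmk MA (m ⊗ₜ[ℂ] (b * a)) := by
  rw [cmk, Submodule.mkQ_apply, Submodule.mkQ_apply, Submodule.Quotient.eq]
  exact Submodule.subset_span ⟨m, a, b, hb, rfl⟩

lemma act_leftIntegral_fixed {l : A} (hl : W.IsLeftIntegral l) (m : M) :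
    MA.act l m ∈ MA.fixed := by
  simp only [ModuleAlgebra.fixed, Set.mem_setOf_eq]
  intro a m'
  have hflip : (MA.act.flip (MA.act l m) : A →ₗ[ℂ] M)
      = MA.act.flip (MA.act l m) ∘ₗ W.etm := by
    refine LinearMap.ext fun z => ?_
    simp only [LinearMap.comp_apply, LinearMap.flip_apply]
    rw [← MA.act_mul, ← MA.act_mul, W.etm_apply, ← hl z]
  rw [MA.act_mul']
  have hmap : TensorProduct.map (MA.act.flip m') (MA.act.flip (MA.act l m))
      = TensorProduct.map (MA.act.flip m') (MA.act.flip (MA.act l m)) ∘ₗ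
          TensorProduct.map (LinearMap.id : A →ₗ[ℂ] A) W.etm := by
    conv_lhs => rw [hflip]
    rw [← TensorProduct.map_comp, LinearMap.comp_id]
  rw [hmap, LinearMap.comp_apply, W.L2]
  obtain ⟨P, hP⟩ := TensorProduct.exists_finset (W.Δ 1)
  rw [hP, map_sum, map_sum]
  have rhs : MA.act a m' * MA.act l m
      = ∑ p ∈ P, MA.act p.1 (MA.act a m') * MA.act p.2 (MA.act l m) := by
    conv_lhs => rw [← MA.act_one (MA.act a m' * MA.act l m)]
    rw [MA.act_mul', hP, map_sum, map_sum]
    simp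
  rw [rhs]
  simp [MA.act_mul]

lemma iM_mul_iA (m : M) (a : A) :
    CS.mul (iM MA m) (iA MA a) = cmk MA (m ⊗ₜ[ℂ] a) := by
  rw [iM_apply, iA_apply, CS.mul_def]
  obtain ⟨P, hP⟩ := TensorProduct.exists_finset (W.Δ 1)
  rw [hP, map_sum, map_sum]
  simp only [TensorProduct.map_tmul, LinearMap.comp_apply, LinearMap.mulLeft_apply,
    LinearMap.flip_apply, LinearMap.mulRight_apply]
  have step : ∀ p ∈ P, cmk MA ((m * MA.act p.1 1) ⊗ₜ[ℂ] (p.2 * a))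
      = cmk MA (m ⊗ₜ[ℂ] (W.etm p.1 * (p.2 * a))) := by
    intro p _
    rw [show MA.act p.1 1 = MA.act (W.etm p.1) 1 from W.etm_apply p.1 ▸ MA.act_unit p.1]
    exact rel MA _ (W.etm_mem_AL p.1)
  rw [Finset.sum_congr rfl step]
  have key : ∑ p ∈ P, W.etm p.1 * (p.2 * a) = a := by
    calc ∑ p ∈ P, W.etm p.1 * (p.2 * a) = (∑ p ∈ P, W.etm p.1 * p.2) * a := by
          rw [Finset.sum_mul]
          exact Finset.sum_congr rfl fun p _ => (mul_assoc _ _ _).symm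
      _ = a := by rw [W.CT_rep 1 hP, one_mul]
  conv_rhs => rw [← key, TensorProduct.tmul_sum, map_sum]

lemma mul_cmk_iA {l' : A} (hl' : W.IsLeftIntegral l') (p : M) (x : A) :
    CS.mul (cmk MA (p ⊗ₜ[ℂ] x)) (iA MA l') = cmk MA ((p * MA.act x 1) ⊗ₜ[ℂ] l') := by
  rw [iA_apply, CS.mul_def]
  obtain ⟨Q, hQ⟩ := TensorProduct.exists_finset (W.Δ x)
  rw [hQ, map_sum, map_sum]
  simp only [TensorProduct.map_tmul, LinearMap.comp_apply, LinearMap.mulLeft_apply,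
    LinearMap.flip_apply, LinearMap.mulRight_apply]
  have step : ∀ q ∈ Q, cmk MA ((p * MA.act q.1 1) ⊗ₜ[ℂ] (q.2 * l'))
      = cmk MA ((p * MA.act q.1 1 * MA.act q.2 1) ⊗ₜ[ℂ] l') := by
    intro q _
    rw [hl' q.2, ← W.etm_apply, ← rel MA l' (W.etm_mem_AL q.2), W.etm_apply, ← MA.act_unit]
  rw [Finset.sum_congr rfl step]
  have key : ∑ q ∈ Q, p * MA.act q.1 1 * MA.act q.2 1 = p * MA.act x 1 := by
    have h2 : MA.act x ((1:M) * 1) = ∑ q ∈ Q, MA.act q.1 1 * MA.act q.2 1 := by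
      rw [MA.act_mul', hQ, map_sum, map_sum]
      simp
    rw [one_mul] at h2
    calc ∑ q ∈ Q, p * MA.act q.1 1 * MA.act q.2 1
        = p * ∑ q ∈ Q, MA.act q.1 1 * MA.act q.2 1 := by
          rw [Finset.mul_sum]
          exact Finset.sum_congr rfl fun q _ => mul_assoc _ _ _
      _ = p * MA.act x 1 := by rw [← h2]
  rw [← key, TensorProduct.sum_tmul, map_sum]

lemma conj3core {l' : A} (hl' : W.IsLeftIntegral l') (a : A) (m : M) :
    CS.mul (CS.mul (iA MA a) (iM MA m)) (iA MA l')
      = CS.mul (iM MA (MA.act a m)) (iA MA l') := by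
  have inner : CS.mul (iA MA a) (iM MA m)
      = cmk MA ((TensorProduct.map (MA.act.flip m) (LinearMap.id : A →ₗ[ℂ] A)) (W.Δ a)) := by
    rw [iA_apply, iM_apply, CS.mul_def, LinearMap.mulLeft_one, LinearMap.id_comp,
      LinearMap.mulRight_one]
  rw [inner]
  obtain ⟨Q, hQ⟩ := TensorProduct.exists_finset (W.Δ a)
  rw [hQ, map_sum, map_sum, map_sum, LinearMap.sum_apply]
  simp only [TensorProduct.map_tmul, LinearMap.flip_apply, LinearMap.id_coe, id_eq]
  rw [Finset.sum_congr rfl fun q _ => mul_cmk_iA MA CS hl' (MA.act q.1 m) q.2]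
  have key : ∑ q ∈ Q, MA.act q.1 m * MA.act q.2 1 = MA.act a m := by
    have h2 : MA.act a (m * 1) = ∑ q ∈ Q, MA.act q.1 m * MA.act q.2 1 := by
      rw [MA.act_mul', hQ, map_sum, map_sum]
      simp
    rw [mul_one] at h2
    exact h2.symm
  rw [iM_apply, mul_cmk_iA MA CS hl' (MA.act a m) 1, MA.act_one, mul_one, ← key,
    TensorProduct.sum_tmul, map_sum]

lemma fixed_star {h : A} (hh : W.IsHaar h) {n : M} (hn : n ∈ MA.fixed) :
    star n ∈ MA.fixed := by
  have hn' : ∀ (a : A) (m : M), MA.act a (m * n) = MA.act a m * n := hn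
  have h1 : MA.act h n = n := by
    have h0 := hn' h 1
    rw [one_mul] at h0
    rw [h0, MA.act_unit, hh.2.2.2.1, MA.act_one, one_mul]
  have h2 : star n = MA.act (star h) (star n) := by
    conv_lhs => rw [← h1]
    rw [MA.act_star, hh.2.2.2.2]
  rw [h2]
  exact act_leftIntegral_fixed MA (W.star_h_leftIntegral hh) (star n)

lemma comm_MR {h : A} (hh : W.IsHaar h) {n : M} (hn : n ∈ MA.fixed) (b : A) :
    n * MA.act b 1 = MA.act b 1 * n := by
  have hn' : ∀ (a : A) (m : M), MA.act a (m * n) = MA.act a m * n := hn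
  have hsn : ∀ (a : A) (m : M), MA.act a (m * star n) = MA.act a m * star n :=
    fixed_star MA hh hn
  have i1 : ∀ c : A, MA.act c n = MA.act c 1 * n := fun c => by
    have h0 := hn' c 1
    rwa [one_mul] at h0
  have i2 : MA.act (star (W.S b)) (star n) = MA.act (star (W.S b)) 1 * star n := by
    have h0 := hsn (star (W.S b)) 1
    rwa [one_mul] at h0
  have j : star (n * MA.act b 1) = MA.act (star (W.S b)) (star n) := by
    rw [star_mul, MA.act_star, star_one, ← i2]
  have k := congrArg star j
  rw [star_star] at k
  rw [k, MA.act_star, star_star, W.S_star, W.Sinv_S]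
  exact i1 b

lemma comm4 {h : A} (hh : W.IsHaar h) {s : A} (hs : s ∈ W.AR) {n : M} (hn : n ∈ MA.fixed) :
    CS.mul (iA MA (s * h * s)) (iM MA n) = cmk MA (n ⊗ₜ[ℂ] (s * h * s)) := by
  have hn' : ∀ (a : A) (m : M), MA.act a (m * n) = MA.act a m * n := hn
  obtain ⟨Q, hQ⟩ := TensorProduct.exists_finset (W.Δ h)
  rw [iA_apply, iM_apply, CS.mul_def, LinearMap.mulLeft_one, LinearMap.id_comp,
    LinearMap.mulRight_one, W.delta_sws_rep hs h hQ, map_sum, map_sum]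
  simp only [TensorProduct.map_tmul, LinearMap.flip_apply, LinearMap.id_coe, id_eq]
  have step : ∀ q ∈ Q, cmk MA (MA.act q.1 n ⊗ₜ[ℂ] (s * q.2 * s))
      = cmk MA (n ⊗ₜ[ℂ] (s * (W.etm q.1 * q.2) * s)) := by
    intro q _
    have a0 := hn' q.1 1
    rw [one_mul] at a0
    have a1 : MA.act q.1 n = n * MA.act q.1 1 := by
      rw [a0, ← comm_MR MA hh hn q.1]
    have a2 : MA.act q.1 1 = MA.act (W.etm q.1) 1 := W.etm_apply q.1 ▸ MA.act_unit q.1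
    rw [a1, a2, rel MA _ (W.etm_mem_AL q.1)]
    have comm := W.AL_AR_comm (W.etm_mem_AL q.1) hs
    have a3 : W.etm q.1 * (s * q.2 * s) = s * (W.etm q.1 * q.2) * s := by
      simp only [← mul_assoc]
      rw [comm]
    rw [a3]
  rw [Finset.sum_congr rfl step]
  have hsum : ∑ q ∈ Q, s * (W.etm q.1 * q.2) * s = s * h * s := by
    calc ∑ q ∈ Q, s * (W.etm q.1 * q.2) * s
        = s * (∑ q ∈ Q, W.etm q.1 * q.2) * s := by rw [Finset.mul_sum, Finset.sum_mul]
      _ = s * h * s := by rw [W.CT_rep h hQ]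
  rw [← hsum, TensorProduct.tmul_sum, map_sum]

lemma step5 {h s : A} (hh : W.IsHaar h) (hs : s ∈ W.AR) (p : M) (w : A) :
    CS.mul (cmk MA (p ⊗ₜ[ℂ] (s * w * s))) (iA MA (s * h * s))
      = cmk MA ((p * MA.act w (MA.act (s * s) 1)) ⊗ₜ[ℂ] (s * h * s)) := by
  rw [iA_apply, CS.mul_def]
  obtain ⟨Q, hQ⟩ := TensorProduct.exists_finset (W.Δ w)
  rw [W.delta_sws_rep hs w hQ, map_sum, map_sum]
  simp only [TensorProduct.map_tmul, LinearMap.comp_apply, LinearMap.mulLeft_apply,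
    LinearMap.flip_apply, LinearMap.mulRight_apply]
  have key1 : ∀ q : A × A, s * q.2 * s * (s * h * s) = W.etm (q.2 * (s * s)) * (s * h * s) := by
    intro q
    have hint := hh.1 (q.2 * (s * s))
    rw [← W.etm_apply] at hint
    have comm := W.AL_AR_comm (W.etm_mem_AL (q.2 * (s * s))) hs
    set b := W.etm (q.2 * (s * s)) with hb
    calc s * q.2 * s * (s * h * s) = s * (q.2 * (s * s) * h) * s := by
          simp only [mul_assoc]
      _ = s * (b * h) * s := by rw [hint]
      _ = b * (s * h * s) := by
          simp only [← mul_assoc]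
          rw [comm]
  have step : ∀ q ∈ Q, cmk MA ((p * MA.act q.1 1) ⊗ₜ[ℂ] (s * q.2 * s * (s * h * s)))
      = cmk MA ((p * MA.act q.1 1 * MA.act q.2 (MA.act (s * s) 1)) ⊗ₜ[ℂ] (s * h * s)) := by
    intro q _
    rw [key1 q, ← rel MA _ (W.etm_mem_AL (q.2 * (s * s))), W.etm_apply, ← MA.act_unit,
      MA.act_mul]
  rw [Finset.sum_congr rfl step]
  have key2 : ∑ q ∈ Q, p * MA.act q.1 1 * MA.act q.2 (MA.act (s * s) 1)
      = p * MA.act w (MA.act (s * s) 1) := by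
    have h2 : MA.act w ((1:M) * MA.act (s * s) 1)
        = ∑ q ∈ Q, MA.act q.1 1 * MA.act q.2 (MA.act (s * s) 1) := by
      rw [MA.act_mul', hQ, map_sum, map_sum]
      simp
    rw [one_mul] at h2
    calc ∑ q ∈ Q, p * MA.act q.1 1 * MA.act q.2 (MA.act (s * s) 1)
        = p * ∑ q ∈ Q, MA.act q.1 1 * MA.act q.2 (MA.act (s * s) 1) := by
          rw [Finset.mul_sum]
          exact Finset.sum_congr rfl fun q _ => mul_assoc _ _ _
      _ = _ := by rw [← h2]
  rw [← key2, TensorProduct.sum_tmul, map_sum]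

lemma conj5a {h s : A} (hh : W.IsHaar h) (hs : s ∈ W.AR) (m : M) :
    CS.mul (CS.mul (iA MA (s * h * s)) (iM MA m)) (iA MA (s * h * s))
      = CS.mul (iM MA (MA.act (h * (s * s)) m)) (iA MA (s * h * s)) := by
  obtain ⟨Q, hQ⟩ := TensorProduct.exists_finset (W.Δ h)
  have inner : CS.mul (iA MA (s * h * s)) (iM MA m)
      = ∑ q ∈ Q, cmk MA (MA.act q.1 m ⊗ₜ[ℂ] (s * q.2 * s)) := by
    rw [iA_apply, iM_apply, CS.mul_def, LinearMap.mulLeft_one, LinearMap.id_comp,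
      LinearMap.mulRight_one, W.delta_sws_rep hs h hQ, map_sum, map_sum]
    simp only [TensorProduct.map_tmul, LinearMap.flip_apply, LinearMap.id_coe, id_eq]
  rw [inner, map_sum, LinearMap.sum_apply]
  rw [Finset.sum_congr rfl fun q _ => step5 MA CS hh hs (MA.act q.1 m) q.2]
  have hΔl : W.Δ (h * (s * s)) = ∑ q ∈ Q, q.1 ⊗ₜ[ℂ] (q.2 * (s * s)) := by
    rw [W.delta_hss hs h, hQ, Finset.sum_mul]
    exact Finset.sum_congr rfl fun q _ => by
      rw [Algebra.TensorProduct.tmul_mul_tmul, mul_one]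
  have key : ∑ q ∈ Q, MA.act q.1 m * MA.act q.2 (MA.act (s * s) 1)
      = MA.act (h * (s * s)) m := by
    have h2 : MA.act (h * (s * s)) (m * 1)
        = ∑ q ∈ Q, MA.act q.1 m * MA.act (q.2 * (s * s)) 1 := by
      rw [MA.act_mul', hΔl, map_sum, map_sum]
      simp
    rw [mul_one] at h2
    calc ∑ q ∈ Q, MA.act q.1 m * MA.act q.2 (MA.act (s * s) 1)
        = ∑ q ∈ Q, MA.act q.1 m * MA.act (q.2 * (s * s)) 1 :=
          Finset.sum_congr rfl fun q _ => by rw [← MA.act_mul]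
      _ = MA.act (h * (s * s)) m := h2.symm
  rw [iM_mul_iA MA CS (MA.act (h * (s * s)) m) (s * h * s), ← key,
    TensorProduct.sum_tmul, map_sum]

end Aux5
/-- Proposition 3.15' of [NSW] (Jones projections from positive left
integrals): for the Haar integral `h` and a self-adjoint `s ∈ A_R`, with
`l = h·s²` and `e_l = s·h·s`:
(i) `l` is a left integral and `E_l(m) = l ▷ m ∈ M^A`;
(ii) `(1 ⋊ a)(m ⋊ 1)(1 ⋊ l') = ((a ▷ m) ⋊ 1)(1 ⋊ l')` for any left integral
`l'`;
(iii) `1 ⋊ e_l` commutes with `M^A ⋊ 1` and satisfies the Jones relation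
`e_l·m·e_l = E_l(m)·e_l = e_l·E_l(m)` in `M ⋊ A`;
(iv) `e_l² = (Σ l₍₁₎ S(l₍₂₎))·e_l` in `A`; in particular `e_l` is idempotent
if `l` is normalized. -/
theorem jones_projection_relations
    {A M : Type} [Ring A] [Algebra ℂ A] [StarRing A] [StarModule ℂ A]
    [Ring M] [Algebra ℂ M] [StarRing M] [StarModule ℂ M]
    (W : WeakHopfAlgebra A) (MA : ModuleAlgebra W M) (CS : CrossedMul MA)
    (h : A) (hh : W.IsHaar h) (s : A) (hs : s ∈ W.AR) (hss : star s = s) :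
    W.IsLeftIntegral (h * (s * s))
    ∧ (∀ m : M, MA.act (h * (s * s)) m ∈ MA.fixed)
    ∧ (∀ l' : A, W.IsLeftIntegral l' → ∀ (a : A) (m : M),
        CS.mul (CS.mul (iA MA a) (iM MA m)) (iA MA l')
          = CS.mul (iM MA (MA.act a m)) (iA MA l'))
    ∧ (∀ n ∈ MA.fixed,
        CS.mul (iA MA (s * h * s)) (iM MA n) = CS.mul (iM MA n) (iA MA (s * h * s)))
    ∧ (∀ m : M,
        CS.mul (CS.mul (iA MA (s * h * s)) (iM MA m)) (iA MA (s * h * s))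
            = CS.mul (iM MA (MA.act (h * (s * s)) m)) (iA MA (s * h * s))
        ∧ CS.mul (iM MA (MA.act (h * (s * s)) m)) (iA MA (s * h * s))
            = CS.mul (iA MA (s * h * s)) (iM MA (MA.act (h * (s * s)) m)))
    ∧ (s * h * s) * (s * h * s) = W.swIdS (h * (s * s)) * (s * h * s)
    ∧ (W.swIdS (h * (s * s)) = 1 → (s * h * s) * (s * h * s) = s * h * s) := by
  have hl : W.IsLeftIntegral (h * (s * s)) := fun a => by
    rw [← mul_assoc, hh.1 a, mul_assoc]
  have e6 : (s * h * s) * (s * h * s) = W.swIdS (h * (s * s)) * (s * h * s) := by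
    have hint := hh.1 (h * (s * s))
    have comm := W.AL_AR_comm (W.swIdS_mem_AL (h * (s * s))) hs
    set b := W.swIdS (h * (s * s)) with hb
    calc (s * h * s) * (s * h * s) = s * (h * (s * s) * h) * s := by simp only [mul_assoc]
      _ = s * (b * h) * s := by rw [hint]
      _ = b * (s * h * s) := by
          simp only [← mul_assoc]
          rw [comm]
  refine ⟨hl, fun m => act_leftIntegral_fixed MA hl m,
    fun l' hl' a m => conj3core MA CS hl' a m,
    fun n hn => (comm4 MA CS hh hs hn).trans (iM_mul_iA MA CS n (s * h * s)).symm,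
    fun m => ⟨conj5a MA CS hh hs m,
      (iM_mul_iA MA CS _ _).trans
        (comm4 MA CS hh hs (act_leftIntegral_fixed MA hl m)).symm⟩,
    e6, fun h1 => by rw [e6, h1, one_mul]⟩
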